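/- If every n-point metric space embeds into L¹ with distortion at most K(n), then for all symmetric C,D : {1,…,n}² → [0,∞), the linear programming relaxation value M*(C,D) (minimum of Σ C(i,j)d_{ij} over all semimetrics d with Σ D(i,j)d_{ij} = 1) satisfies Φ*(C,D) ≤ K(n)·M*(C,D) and M*(C,D) ≤ Φ*(C,D). -/

import Mathlib

open MeasureTheory

noncomputable abbrev SpaceL1 := Lp ℝ 1 (volume : Measure ℝ)

/-- Indicator of a cut S ⊆ {1,…,n}. -/
def cutInd {n : ℕ} (S : Finset (Fin n)) (i : Fin n) : ℝ := if i ∈ S then 1 else 0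

/-- If every n-point (semi)metric space embeds into L¹ with distortion at most
K(n), then the LP relaxation M*(C,D) satisfies Φ* ≤ K(n)·M* and M* ≤ Φ*. -/
theorem stmt6 (n : ℕ) (K : ℕ → ℝ)
    (hembed : ∀ d : Fin n → Fin n → ℝ,
      (∀ i, d i i = 0) → (∀ i j, d i j = d j i) → (∀ i j, 0 ≤ d i j) →
      (∀ i j k, d i k ≤ d i j + d j k) →
      ∃ (f : Fin n → SpaceL1) (s : ℝ), 0 < s ∧
        ∀ i j, s * d i j ≤ ‖f i - f j‖ ∧ ‖f i - f j‖ ≤ K n * s * d i j)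
    (C D : Fin n → Fin n → ℝ)
    (hCsym : ∀ i j, C i j = C j i) (hDsym : ∀ i j, D i j = D j i)
    (hC : ∀ i j, 0 ≤ C i j) (hD : ∀ i j, 0 ≤ D i j)
    (hpos : ∀ S : Finset (Fin n), S.Nonempty → S ≠ Finset.univ →
      0 < ∑ i, ∑ j, D i j * |cutInd S i - cutInd S j|)
    (hΦ : sInf {r : ℝ | ∃ S : Finset (Fin n), S.Nonempty ∧ S ≠ Finset.univ ∧
        r = (∑ i, ∑ j, C i j * |cutInd S i - cutInd S j|) /
            (∑ i, ∑ j, D i j * |cutInd S i - cutInd S j|)} =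
      sInf {r : ℝ | ∃ f : Fin n → SpaceL1,
        0 < ∑ i, ∑ j, D i j * ‖f i - f j‖ ∧
        r = (∑ i, ∑ j, C i j * ‖f i - f j‖) /
            (∑ i, ∑ j, D i j * ‖f i - f j‖)}) :
    sInf {r : ℝ | ∃ S : Finset (Fin n), S.Nonempty ∧ S ≠ Finset.univ ∧
        r = (∑ i, ∑ j, C i j * |cutInd S i - cutInd S j|) /
            (∑ i, ∑ j, D i j * |cutInd S i - cutInd S j|)} ≤
      K n * sInf {v : ℝ | ∃ d : Fin n → Fin n → ℝ,
        (∀ i, d i i = 0) ∧ (∀ i j, d i j = d j i) ∧ (∀ i j, 0 ≤ d i j) ∧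
        (∀ i j k, d i k ≤ d i j + d j k) ∧
        (∑ i, ∑ j, D i j * d i j) = 1 ∧ v = ∑ i, ∑ j, C i j * d i j}
    ∧
    sInf {v : ℝ | ∃ d : Fin n → Fin n → ℝ,
        (∀ i, d i i = 0) ∧ (∀ i j, d i j = d j i) ∧ (∀ i j, 0 ≤ d i j) ∧
        (∀ i j k, d i k ≤ d i j + d j k) ∧
        (∑ i, ∑ j, D i j * d i j) = 1 ∧ v = ∑ i, ∑ j, C i j * d i j} ≤
      sInf {r : ℝ | ∃ S : Finset (Fin n), S.Nonempty ∧ S ≠ Finset.univ ∧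
        r = (∑ i, ∑ j, C i j * |cutInd S i - cutInd S j|) /
            (∑ i, ∑ j, D i j * |cutInd S i - cutInd S j|)} := by
  classical
  set A : Set ℝ := {r : ℝ | ∃ S : Finset (Fin n), S.Nonempty ∧ S ≠ Finset.univ ∧
        r = (∑ i, ∑ j, C i j * |cutInd S i - cutInd S j|) /
            (∑ i, ∑ j, D i j * |cutInd S i - cutInd S j|)} with hAdef
  set B : Set ℝ := {r : ℝ | ∃ f : Fin n → SpaceL1,
        0 < ∑ i, ∑ j, D i j * ‖f i - f j‖ ∧
        r = (∑ i, ∑ j, C i j * ‖f i - f j‖) /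
            (∑ i, ∑ j, D i j * ‖f i - f j‖)} with hBdef
  set L : Set ℝ := {v : ℝ | ∃ d : Fin n → Fin n → ℝ,
        (∀ i, d i i = 0) ∧ (∀ i j, d i j = d j i) ∧ (∀ i j, 0 ≤ d i j) ∧
        (∀ i j k, d i k ≤ d i j + d j k) ∧
        (∑ i, ∑ j, D i j * d i j) = 1 ∧ v = ∑ i, ∑ j, C i j * d i j} with hLdef
  rcases lt_or_ge n 2 with hn | hn
  · -- degenerate case n ≤ 1 : both A and L are empty
    haveI hsub : Subsingleton (Fin n) := by
      apply Fintype.card_le_one_iff_subsingleton.mp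
      simpa using Nat.lt_succ_iff.mp hn
    have hAe : A = ∅ := by
      rw [hAdef]
      ext r
      simp only [Set.mem_setOf_eq, Set.mem_empty_iff_false, iff_false, not_exists]
      rintro S ⟨⟨i, hi⟩, hS2, -⟩
      exact hS2 (Finset.eq_univ_of_forall fun j => by rwa [Subsingleton.elim j i])
    have hLe : L = ∅ := by
      rw [hLdef]
      ext v
      simp only [Set.mem_setOf_eq, Set.mem_empty_iff_false, iff_false, not_exists]
      rintro d ⟨hd0, -, -, -, hsum, -⟩
      have : (∑ i, ∑ j, D i j * d i j) = 0 := by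
        refine Finset.sum_eq_zero fun i _ => Finset.sum_eq_zero fun j _ => ?_
        rw [Subsingleton.elim j i, hd0, mul_zero]
      rw [this] at hsum
      norm_num at hsum
    rw [hAe, hLe, Real.sInf_empty]
    norm_num
  · -- main case n ≥ 2
    have i0 : Fin n := ⟨0, by omega⟩
    have i1 : Fin n := ⟨1, by omega⟩
    -- basic nonnegativity of double sums
    have sum2_nonneg : ∀ (E g : Fin n → Fin n → ℝ), (∀ i j, 0 ≤ E i j) →
        (∀ i j, 0 ≤ g i j) → 0 ≤ ∑ i, ∑ j, E i j * g i j := fun E g hE hg =>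
      Finset.sum_nonneg fun i _ => Finset.sum_nonneg fun j _ =>
        mul_nonneg (hE i j) (hg i j)
    have hAL : A ⊆ L := by
      rintro r ⟨S, hS1, hS2, rfl⟩
      have ht : 0 < ∑ i, ∑ j, D i j * |cutInd S i - cutInd S j| := hpos S hS1 hS2
      set t := ∑ i, ∑ j, D i j * |cutInd S i - cutInd S j| with htdef
      refine ⟨fun i j => |cutInd S i - cutInd S j| / t, ?_, ?_, ?_, ?_, ?_, ?_⟩
      · intro i; simp
      · intro i j; dsimp only; rw [abs_sub_comm]
      · intro i j
        exact div_nonneg (abs_nonneg _) ht.le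
      · intro i j k
        dsimp only
        rw [← add_div]
        exact (div_le_div_iff_of_pos_right ht).mpr (abs_sub_le _ _ _)
      · dsimp only
        simp_rw [← mul_div_assoc, ← Finset.sum_div]
        exact div_self ht.ne'
      · dsimp only
        simp_rw [← mul_div_assoc, ← Finset.sum_div]
    have hL_bdd : BddBelow L := by
      refine ⟨0, ?_⟩
      rintro v ⟨d, -, -, hdnn, -, -, rfl⟩
      exact sum2_nonneg C d hC hdnn
    have hB_bdd : BddBelow B := by
      refine ⟨0, ?_⟩
      rintro r ⟨f, hden, rfl⟩
      exact div_nonneg (sum2_nonneg C _ hC fun i j => norm_nonneg _) hden.le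
    obtain ⟨i0, i1, hne⟩ : ∃ i0 i1 : Fin n, i1 ≠ i0 :=
      ⟨⟨0, by omega⟩, ⟨1, by omega⟩, by simp [Fin.ext_iff]⟩
    have hS0 : ({i0} : Finset (Fin n)).Nonempty := ⟨i0, Finset.mem_singleton_self i0⟩
    have hS0u : ({i0} : Finset (Fin n)) ≠ Finset.univ := by
      intro h
      have : i1 ∈ ({i0} : Finset (Fin n)) := h ▸ Finset.mem_univ i1
      rw [Finset.mem_singleton] at this
      exact hne this
    have hA_ne : A.Nonempty := ⟨_, ⟨{i0}, hS0, hS0u, rfl⟩⟩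
    have hK1 : 1 ≤ K n := by
      obtain ⟨f, s, hs, hf⟩ := hembed
        (fun i j => |cutInd ({i0} : Finset (Fin n)) i - cutInd {i0} j|)
        (fun i => by simp) (fun i j => abs_sub_comm _ _)
        (fun i j => abs_nonneg _) (fun i j k => abs_sub_le _ _ _)
      have h1 := (hf i0 i1).1
      have h2 := (hf i0 i1).2
      have h01 : |cutInd ({i0} : Finset (Fin n)) i0 - cutInd {i0} i1| = 1 := by
        simp [cutInd, Finset.mem_singleton, hne]
      rw [h01, mul_one] at h1 h2
      nlinarith
    have hKpos : 0 < K n := lt_of_lt_of_le one_pos hK1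
    have hmain : ∀ v ∈ L, sInf B ≤ K n * v := by
      rintro v ⟨d, hd0, hdsym, hdnn, hdtri, hdD, rfl⟩
      obtain ⟨f, s, hs, hf⟩ := hembed d hd0 hdsym hdnn hdtri
      have hden : s ≤ ∑ i, ∑ j, D i j * ‖f i - f j‖ := by
        calc s = ∑ i, ∑ j, D i j * (s * d i j) := by
              simp_rw [show ∀ (i j : Fin n), D i j * (s * d i j) = s * (D i j * d i j)
                from fun i j => by ring, ← Finset.mul_sum, hdD, mul_one]
          _ ≤ _ := Finset.sum_le_sum fun i _ => Finset.sum_le_sum fun j _ =>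
              mul_le_mul_of_nonneg_left (hf i j).1 (hD i j)
      have hdenpos : 0 < ∑ i, ∑ j, D i j * ‖f i - f j‖ := lt_of_lt_of_le hs hden
      have hnum : (∑ i, ∑ j, C i j * ‖f i - f j‖) ≤ K n * s * (∑ i, ∑ j, C i j * d i j) := by
        calc (∑ i, ∑ j, C i j * ‖f i - f j‖) ≤ ∑ i, ∑ j, C i j * (K n * s * d i j) :=
              Finset.sum_le_sum fun i _ => Finset.sum_le_sum fun j _ =>
                mul_le_mul_of_nonneg_left (hf i j).2 (hC i j)
          _ = _ := by
              simp_rw [show ∀ (i j : Fin n), C i j * (K n * s * d i j) =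
                K n * s * (C i j * d i j) from fun i j => by ring, ← Finset.mul_sum]
      have hv0 : 0 ≤ ∑ i, ∑ j, C i j * d i j := sum2_nonneg C d hC hdnn
      have hmem : (∑ i, ∑ j, C i j * ‖f i - f j‖) / (∑ i, ∑ j, D i j * ‖f i - f j‖) ∈ B :=
        ⟨f, hdenpos, rfl⟩
      have h1 : (∑ i, ∑ j, C i j * ‖f i - f j‖) / (∑ i, ∑ j, D i j * ‖f i - f j‖)
          ≤ (K n * s * (∑ i, ∑ j, C i j * d i j)) / s :=
        div_le_div₀ (mul_nonneg (mul_nonneg hKpos.le hs.le) hv0) hnum hs hden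
      have h2 : (K n * s * (∑ i, ∑ j, C i j * d i j)) / s
          = K n * ∑ i, ∑ j, C i j * d i j := by
        field_simp
      exact le_trans (csInf_le hB_bdd hmem) (le_trans h1 (le_of_eq h2))
    have hL_ne : L.Nonempty := hA_ne.mono hAL
    constructor
    · rw [hΦ]
      have hle : sInf B / K n ≤ sInf L := by
        apply le_csInf hL_ne
        intro v hv
        rw [div_le_iff₀ hKpos]
        calc sInf B ≤ K n * v := hmain v hv
          _ = v * K n := mul_comm _ _
      calc sInf B = (sInf B / K n) * K n := by field_simp
        _ ≤ sInf L * K n := mul_le_mul_of_nonneg_right hle hKpos.le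
        _ = K n * sInf L := mul_comm _ _
    · exact csInf_le_csInf hL_bdd hA_ne hAL
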